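/- Let d be an odd positive integer, and let p(x) = a_0 + a_1 x + … + a_d x^d be a real polynomial. Then there exists an extremum point η of the degree-d Chebyshev polynomial T_d in [−1,1] (a point with |T_d(η)| = 1) such that |p(η)| ≥ |a_1| / d. -/

import Mathlib

open Polynomial Real Finset

noncomputable def vv (d k : ℕ) : ℝ := Real.cos (k * Real.pi / d)

lemma vv_anti {d : ℕ} (hd0 : 0 < d) {j k : ℕ} (hjk : j < k) (hkd : k ≤ d) : vv d k < vv d j := by
  have hd : (0:ℝ) < d := by exact_mod_cast hd0
  have hj : (j:ℝ) < k := by exact_mod_cast hjk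
  have hp := Real.pi_pos
  apply Real.cos_lt_cos_of_nonneg_of_le_pi
  · positivity
  · rw [div_le_iff₀ hd]
    have : (k:ℝ) ≤ d := by exact_mod_cast hkd
    nlinarith
  · apply div_lt_div_of_pos_right ?_ hd
    nlinarith

lemma vv_mem {d k : ℕ} : vv d k ∈ Set.Icc (-1:ℝ) 1 :=
  ⟨Real.neg_one_le_cos _, Real.cos_le_one _⟩

lemma vv_injOn {d : ℕ} (hd0 : 0 < d) : Set.InjOn (fun k : ℕ => vv d k) (Finset.range (d+1)) := by
  intro a ha b hb hab
  simp only [Finset.coe_range, Set.mem_Iio] at ha hb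
  simp only at hab
  by_contra hne
  rcases Nat.lt_or_ge a b with h | h
  · exact absurd hab (ne_of_gt (vv_anti hd0 h (by omega)))
  · have h' : b < a := by omega
    exact absurd hab (ne_of_lt (vv_anti hd0 h' (by omega)))

lemma vv_ne_zero {d : ℕ} (hd : Odd d) {k : ℕ} (hk : k ≤ d) : vv d k ≠ 0 := by
  have hd0 : 0 < d := hd.pos
  have hdr : (0:ℝ) < d := by exact_mod_cast hd0
  intro h
  rw [vv, Real.cos_eq_zero_iff] at h
  obtain ⟨n, hn⟩ := h
  have hpi := Real.pi_ne_zero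
  have hr : ((k:ℝ)*2) * π = (((2*n+1) * d : ℤ) : ℝ) * π := by
    field_simp at hn
    push_cast
    linear_combination π * hn
  have h2 : ((k:ℤ) * 2 : ℝ) = (((2*n+1) * d : ℤ) : ℝ) := by
    have := mul_right_cancel₀ hpi hr
    push_cast at this ⊢
    linarith
  have h3 : (k:ℤ) * 2 = (2*n+1) * d := by exact_mod_cast h2
  have hodd : Odd ((2*n+1) * (d:ℤ)) := (odd_two_mul_add_one n).mul (by exact_mod_cast hd)
  rw [← h3] at hodd
  exact (Int.not_odd_iff_even.mpr ⟨k, by ring⟩) hodd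

lemma vv_reflect {d : ℕ} (hd0 : 0 < d) {k : ℕ} (hk : k ≤ d) : vv d (d - k) = - vv d k := by
  have hdr : (0:ℝ) < d := by exact_mod_cast hd0
  have hcast : ((d - k : ℕ) : ℝ) = (d:ℝ) - k := by
    push_cast [Nat.cast_sub hk]; ring
  rw [vv, vv, hcast, ← Real.cos_pi_sub]
  congr 1
  field_simp

lemma T_eval_vv {d : ℕ} (hd0 : 0 < d) (k : ℕ) :
    (Polynomial.Chebyshev.T ℝ d).eval (vv d k) = (-1)^k := by
  rw [vv, Polynomial.Chebyshev.T_real_cos]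
  have h : ((d:ℤ):ℝ) * ((k:ℝ) * Real.pi / d) = 0 + k * Real.pi := by
    have hdr : (d:ℝ) ≠ 0 := by positivity
    push_cast
    field_simp
    ring
  rw [h, Real.cos_add_nat_mul_pi, Real.cos_zero, mul_one]

open Polynomial.Chebyshev in
lemma T_natDeg_le : ∀ n : ℕ, (Polynomial.Chebyshev.T ℝ (n:ℤ)).natDegree ≤ n := by
  intro n
  induction n using Nat.strong_induction_on with
  | _ n ih =>
    match n with
    | 0 => simp [Polynomial.Chebyshev.T_zero]
    | 1 => simp [Polynomial.Chebyshev.T_one]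
    | (k+2) =>
      rw [show ((k+2:ℕ):ℤ) = (k:ℤ)+2 by push_cast; ring, Polynomial.Chebyshev.T_add_two]
      apply le_trans (natDegree_sub_le _ _)
      have h1 : (2 * X * Polynomial.Chebyshev.T ℝ ((k:ℤ)+1)).natDegree ≤ k + 2 := by
        apply le_trans (natDegree_mul_le)
        have : ((k:ℤ)+1) = ((k+1:ℕ):ℤ) := by push_cast; ring
        rw [this]
        have h2 := ih (k+1) (by omega)
        have h3 : (2 * X : ℝ[X]).natDegree ≤ 1 := by
          apply le_trans natDegree_mul_le
          simp
        omega
      have h4 : (Polynomial.Chebyshev.T ℝ (k:ℤ)).natDegree ≤ k := ih k (by omega)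
      simp only [max_le_iff]
      omega

lemma T_coeff_one_abs {d : ℕ} (hd : Odd d) :
    |(Polynomial.Chebyshev.T ℝ (d:ℤ)).coeff 1| = d := by
  obtain ⟨t, ht⟩ := hd
  have hc : (Polynomial.Chebyshev.T ℝ (d:ℤ)).coeff 1
      = (Polynomial.derivative (Polynomial.Chebyshev.T ℝ (d:ℤ))).coeff 0 := by
    rw [Polynomial.coeff_derivative]; simp
  rw [hc, Polynomial.Chebyshev.T_derivative_eq_U, Polynomial.coeff_zero_eq_eval_zero]
  have h0 : (0:ℝ) = Real.cos (Real.pi/2) := by rw [Real.cos_pi_div_two]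
  have hU : (Polynomial.Chebyshev.U ℝ ((d:ℤ)-1)).eval 0 = Real.sin (d * (Real.pi/2)) := by
    have := Polynomial.Chebyshev.U_real_cos (Real.pi/2) ((d:ℤ)-1)
    rw [Real.cos_pi_div_two, Real.sin_pi_div_two, mul_one] at this
    rw [this]
    congr 1
    push_cast
    ring
  have hsin : Real.sin ((d:ℝ) * (Real.pi/2)) = (-1)^t := by
    have : (d:ℝ) * (Real.pi/2) = Real.pi/2 + t * Real.pi := by
      rw [ht]; push_cast; ring
    rw [this, Real.sin_add_nat_mul_pi, Real.sin_pi_div_two, mul_one]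
  have : ((d:ℤ) : ℝ[X]) * Polynomial.Chebyshev.U ℝ ((d:ℤ)-1) = (Polynomial.C (d:ℝ)) * Polynomial.Chebyshev.U ℝ ((d:ℤ)-1) := by
    norm_cast
  rw [this, Polynomial.eval_mul, Polynomial.eval_C, hU, hsin]
  rw [abs_mul, abs_pow, abs_neg, abs_one, one_pow, mul_one, Nat.abs_cast]

lemma prodPairAux {M : Type*} [CommMonoid M] (m : ℕ) (f : ℕ → M) :
    ∏ j ∈ Finset.range (2*m), f j = ∏ j ∈ Finset.range m, (f j * f (2*m - 1 - j)) := by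
  rw [two_mul, Finset.prod_range_add, ← Finset.prod_range_reflect (fun i => f (m+i)) m,
    ← Finset.prod_mul_distrib]
  apply Finset.prod_congr rfl
  intro j hj
  simp only [Finset.mem_range] at hj
  congr 2
  omega

noncomputable def lam (d k : ℕ) : ℝ :=
  (Lagrange.basis (Finset.range (d+1)) (vv d) k).coeff 1

lemma coeff1_eq_sum {d : ℕ} (hd0 : 0 < d) (q : ℝ[X]) (hq : q.natDegree ≤ d) :
    q.coeff 1 = ∑ k ∈ Finset.range (d+1), q.eval (vv d k) * lam d k := by
  have hcard : (Finset.range (d+1)).card = d + 1 := Finset.card_range _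
  have hdeg : q.degree < ((Finset.range (d+1)).card : ℕ) := by
    rw [hcard]
    calc q.degree ≤ (q.natDegree : WithBot ℕ) := Polynomial.degree_le_natDegree
      _ < ((d+1 : ℕ) : WithBot ℕ) := by exact_mod_cast Nat.lt_succ_of_le hq
  have h := Lagrange.eq_interpolate (vv_injOn hd0) hdeg
  conv_lhs => rw [h]
  rw [Lagrange.interpolate_apply, Polynomial.finset_sum_coeff]
  apply Finset.sum_congr rfl
  intro k _
  rw [Polynomial.coeff_C_mul, lam]

lemma N_coeff1 {d t : ℕ} (hd : Odd d) (ht : d = 2*t+1) :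
    (∏ j ∈ Finset.range (d+1), (Polynomial.X - Polynomial.C (vv d j))).coeff 1 = 0 := by
  have hd0 : 0 < d := hd.pos
  have h2m : d + 1 = 2*(t+1) := by omega
  have hpair : (∏ j ∈ Finset.range (d+1), (Polynomial.X - Polynomial.C (vv d j)))
      = ∏ j ∈ Finset.range (t+1),
        ((Polynomial.X - Polynomial.C ((vv d j)^2)).comp (Polynomial.X^2)) := by
    rw [h2m, prodPairAux]
    apply Finset.prod_congr rfl
    intro j hj
    simp only [Finset.mem_range] at hj
    have hjd : j ≤ d := by omega
    have hidx : 2*(t+1) - 1 - j = d - j := by omega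
    rw [hidx, vv_reflect hd0 hjd, map_neg, sub_neg_eq_add]
    simp only [Polynomial.sub_comp, Polynomial.X_comp, Polynomial.C_comp]
    rw [map_pow]
    ring
  rw [hpair, ← Polynomial.prod_comp]
  set R := ∏ j ∈ Finset.range (t+1), (Polynomial.X - Polynomial.C ((vv d j)^2)) with hR
  have h1 : (R.comp (Polynomial.X^2)).coeff 1
      = (Polynomial.derivative (R.comp (Polynomial.X^2))).coeff 0 := by
    rw [Polynomial.coeff_derivative]; simp
  rw [h1, Polynomial.derivative_comp, Polynomial.coeff_zero_eq_eval_zero]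
  simp

set_option maxHeartbeats 1000000 in
lemma lam_abs {d t : ℕ} (hd : Odd d) (ht : d = 2*t+1) {k : ℕ} (hk : k ≤ d) :
    |lam d k| = (-1:ℝ)^(k+t) * lam d k := by
  have hd0 : 0 < d := hd.pos
  set s := Finset.range (d+1) with hs
  have hks : k ∈ s := by simp [hs]; omega
  set V : ℕ → ℝ := vv d with hV
  set E := s.erase k with hE
  -- basis decomposition
  set c : ℝ := ∏ j ∈ E, (V k - V j)⁻¹ with hc
  set W : ℝ[X] := ∏ j ∈ E, (Polynomial.X - Polynomial.C (V j)) with hW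
  have hbasis : Lagrange.basis s V k = Polynomial.C c * W := by
    rw [Lagrange.basis]
    simp only [Lagrange.basisDivisor]
    rw [Finset.prod_mul_distrib, hc, map_prod]
  -- W coeff 0
  have hW0 : W.coeff 0 = ∏ j ∈ E, (-(V j)) := by
    rw [Polynomial.coeff_zero_eq_eval_zero, hW, Polynomial.eval_prod]
    apply Finset.prod_congr rfl
    intro j _
    simp
  -- N relation
  have hN : (Polynomial.X - Polynomial.C (V k)) * W
      = ∏ j ∈ s, (Polynomial.X - Polynomial.C (V j)) := by
    rw [hW]; exact Finset.mul_prod_erase s (fun j => Polynomial.X - Polynomial.C (V j)) hks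
  have hNc := congrArg (fun p : ℝ[X] => p.coeff 1) hN
  simp only [sub_mul, Polynomial.coeff_sub, Polynomial.coeff_C_mul] at hNc
  rw [show (1:ℕ) = 0 + 1 from rfl, Polynomial.coeff_X_mul] at hNc
  rw [N_coeff1 hd ht] at hNc
  -- so W.coeff 0 - V k * W.coeff 1 = 0
  have hVk : V k ≠ 0 := vv_ne_zero hd hk
  have hW1 : W.coeff 1 = W.coeff 0 * (V k)⁻¹ := by
    field_simp
    linarith [hNc]
  -- prod of all V
  set P : ℝ := ∏ j ∈ Finset.range (t+1), (V j)^2 with hP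
  have hProdV : ∏ j ∈ s, V j = (-1:ℝ)^(t+1) * P := by
    rw [hs, show d + 1 = 2*(t+1) by omega, prodPairAux]
    have : ∀ j ∈ Finset.range (t+1), V j * V (2*(t+1)-1-j) = (-1) * (V j)^2 := by
      intro j hj
      simp only [Finset.mem_range] at hj
      have hjd : j ≤ d := by omega
      have hidx : 2*(t+1) - 1 - j = d - j := by omega
      rw [hidx, hV, vv_reflect hd0 hjd]
      ring
    rw [Finset.prod_congr rfl this, Finset.prod_mul_distrib, Finset.prod_const,
      Finset.card_range, hP]
  have hprodE : ∏ j ∈ E, V j = (∏ j ∈ s, V j) * (V k)⁻¹ := by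
    field_simp
    rw [mul_comm]
    exact Finset.mul_prod_erase s V hks
  have hcardE : E.card = d := by
    rw [hE, Finset.card_erase_of_mem hks, Finset.card_range]
    omega
  have hW0' : W.coeff 0 = (-1:ℝ)^d * ((∏ j ∈ s, V j) * (V k)⁻¹) := by
    rw [hW0, ← hprodE]
    have : ∀ j ∈ E, -(V j) = (-1) * V j := by intro j _; ring
    rw [Finset.prod_congr rfl this, Finset.prod_mul_distrib, Finset.prod_const, hcardE]
  -- closed form for lam
  have hlam : lam d k = c * ((-1:ℝ)^d * ((-1:ℝ)^(t+1) * P * ((V k)⁻¹)^2)) := by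
    rw [lam, ← hs, ← hV, hbasis, Polynomial.coeff_C_mul, hW1, hW0', hProdV]
    ring
  -- sign of c : split E
  set C1 : ℝ := ∏ j ∈ Finset.range k, (V j - V k)⁻¹ with hC1
  have hC1pos : 0 < C1 := by
    apply Finset.prod_pos
    intro j hj
    simp only [Finset.mem_range] at hj
    have h2 : V k < V j := vv_anti hd0 hj hk
    have h3 : (0:ℝ) < V j - V k := by linarith
    positivity
  set C2 : ℝ := ∏ j ∈ Finset.Ico (k+1) (d+1), (V k - V j)⁻¹ with hC2
  have hC2pos : 0 < C2 := by
    apply Finset.prod_pos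
    intro j hj
    simp only [Finset.mem_Ico] at hj
    have h2 : V j < V k := vv_anti hd0 (show k < j by omega) (show j ≤ d by omega)
    have h3 : (0:ℝ) < V k - V j := by linarith
    positivity
  have hEsplit : E = Finset.range k ∪ Finset.Ico (k+1) (d+1) := by
    ext j
    simp only [hE, hs, Finset.mem_erase, Finset.mem_range, Finset.mem_union, Finset.mem_Ico]
    omega
  have hdisj : Disjoint (Finset.range k) (Finset.Ico (k+1) (d+1)) := by
    rw [Finset.disjoint_left]
    intro j hj hj'
    simp only [Finset.mem_range] at hj
    simp only [Finset.mem_Ico] at hj'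
    omega
  have hcsign : c = (-1:ℝ)^k * (C1 * C2) := by
    have h1 : ∀ j ∈ Finset.range k, (V k - V j)⁻¹ = (-1) * (V j - V k)⁻¹ := by
      intro j _
      rw [show V k - V j = -(V j - V k) by ring, inv_neg]; ring
    rw [hc, hEsplit, Finset.prod_union hdisj, Finset.prod_congr rfl h1,
      Finset.prod_mul_distrib, Finset.prod_const, Finset.card_range, ← hC1, ← hC2]
    ring
  -- P positive
  have hPpos : 0 < P := by
    apply Finset.prod_pos
    intro j hj
    simp only [Finset.mem_range] at hj
    have : V j ≠ 0 := vv_ne_zero hd (by omega)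
    positivity
  -- final sign computation
  have hfin : lam d k = (-1:ℝ)^(k+t) * ((C1 * C2) * (P * ((V k)⁻¹)^2)) := by
    have hpow : ((-1:ℝ))^d = -1 := Odd.neg_one_pow hd
    rw [hlam, hcsign, hpow, pow_succ, pow_add]
    ring
  have hpos : 0 < (C1 * C2) * (P * ((V k)⁻¹)^2) :=
    mul_pos (mul_pos hC1pos hC2pos) (mul_pos hPpos (pow_two_pos_of_ne_zero (inv_ne_zero hVk)))
  have heven : ((-1:ℝ))^(k+t) * ((-1:ℝ))^(k+t) = 1 := by
    rw [← pow_add]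
    exact Even.neg_one_pow ⟨k+t, by ring⟩
  rw [hfin, abs_mul, abs_of_pos hpos]
  rw [abs_pow, abs_neg, abs_one, one_pow, one_mul]
  linear_combination (-(C1 * C2 * P * ((V k)⁻¹) ^ 2)) * heven

lemma sum_abs_lam {d t : ℕ} (hd : Odd d) (ht : d = 2*t+1) :
    ∑ k ∈ Finset.range (d+1), |lam d k| = d := by
  have hd0 : 0 < d := hd.pos
  have hTdeg : (Polynomial.Chebyshev.T ℝ (d:ℤ)).natDegree ≤ d := T_natDeg_le d
  have hsum : (Polynomial.Chebyshev.T ℝ (d:ℤ)).coeff 1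
      = ∑ k ∈ Finset.range (d+1), (-1:ℝ)^k * lam d k := by
    rw [coeff1_eq_sum hd0 _ hTdeg]
    apply Finset.sum_congr rfl
    intro k _
    rw [T_eval_vv hd0 k]
  have h1 : ∑ k ∈ Finset.range (d+1), |lam d k|
      = (-1:ℝ)^t * ∑ k ∈ Finset.range (d+1), (-1:ℝ)^k * lam d k := by
    rw [Finset.mul_sum]
    apply Finset.sum_congr rfl
    intro k hk
    simp only [Finset.mem_range] at hk
    rw [lam_abs hd ht (show k ≤ d by omega), pow_add]
    ring
  have h2 : (0:ℝ) ≤ ∑ k ∈ Finset.range (d+1), |lam d k| :=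
    Finset.sum_nonneg (fun k _ => abs_nonneg _)
  have h3 : ∑ k ∈ Finset.range (d+1), |lam d k|
      = abs (∑ k ∈ Finset.range (d+1), |lam d k|) := (abs_of_nonneg h2).symm
  rw [h3, h1, abs_mul, abs_pow, abs_neg, abs_one, one_pow, one_mul, ← hsum,
    T_coeff_one_abs hd]

theorem stmt8 (d : ℕ) (hd : Odd d) (hd0 : 0 < d) (a : ℕ → ℝ) :
    ∃ η ∈ Set.Icc (-1 : ℝ) 1,
      |(Polynomial.Chebyshev.T ℝ d).eval η| = 1 ∧
      |a 1| / d ≤ |∑ i ∈ Finset.range (d + 1), a i * η ^ i| := by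
  obtain ⟨t, ht⟩ := hd
  have hd' : Odd d := ⟨t, ht⟩
  set p : ℝ[X] := ∑ i ∈ Finset.range (d+1), Polynomial.C (a i) * Polynomial.X^i with hp
  have hpdeg : p.natDegree ≤ d := by
    apply Polynomial.natDegree_sum_le_of_forall_le
    intro i hi
    simp only [Finset.mem_range] at hi
    apply le_trans (Polynomial.natDegree_C_mul_le _ _)
    simpa using Nat.lt_succ_iff.mp hi
  have hpcoeff : p.coeff 1 = a 1 := by
    rw [hp, Polynomial.finset_sum_coeff]
    simp only [Polynomial.coeff_C_mul, Polynomial.coeff_X_pow]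
    rw [Finset.sum_eq_single 1]
    · simp
    · intro b _ hb
      simp [Ne.symm hb]
    · intro h
      simp at h
      omega
  have hpeval : ∀ x : ℝ, p.eval x = ∑ i ∈ Finset.range (d+1), a i * x ^ i := by
    intro x
    rw [hp, Polynomial.eval_finset_sum]
    simp
  obtain ⟨k0, hk0s, hmax⟩ := Finset.exists_max_image (Finset.range (d+1))
    (fun k => |p.eval (vv d k)|) ⟨0, by simp⟩
  set M := |p.eval (vv d k0)| with hM
  have hineq : |a 1| ≤ M * d := by
    calc |a 1| = |∑ k ∈ Finset.range (d+1), p.eval (vv d k) * lam d k| := by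
          rw [← hpcoeff, coeff1_eq_sum hd0 p hpdeg]
      _ ≤ ∑ k ∈ Finset.range (d+1), |p.eval (vv d k) * lam d k| :=
          Finset.abs_sum_le_sum_abs _ _
      _ ≤ ∑ k ∈ Finset.range (d+1), M * |lam d k| := by
          apply Finset.sum_le_sum
          intro k hk
          rw [abs_mul]
          exact mul_le_mul_of_nonneg_right (hmax k hk) (abs_nonneg _)
      _ = M * ∑ k ∈ Finset.range (d+1), |lam d k| := by rw [Finset.mul_sum]
      _ = M * d := by rw [sum_abs_lam hd' ht]
  refine ⟨vv d k0, vv_mem, ?_, ?_⟩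
  · rw [T_eval_vv hd0 k0]
    simp [abs_pow]
  · rw [← hpeval]
    rw [div_le_iff₀ (by exact_mod_cast hd0)]
    exact hineq
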